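/- Let V be a normed real vector space and let D ⊆ V be a dense additive subgroup of V. Let H be a finitely generated abelian group and let ψ : H → V be an additive homomorphism. Then for any finite set of elements g_1, …, g_n ∈ H and any ε > 0, there exists an additive homomorphism h : H → V whose range is contained in D such that ‖ψ(g_i) − h(g_i)‖ < ε for every 1 ≤ i ≤ n. -/

import Mathlib

/-- Lemma `approx`: Let `V` be a normed real vector space, `D ⊆ V` a dense
additive subgroup, `H` a finitely generated abelian group and `ψ : H → V` an additive
homomorphism. Then for any `g₁, …, g_n ∈ H` and `ε > 0` there is an additive homomorphism
`h : H → V` with range contained in `D` such that `‖ψ (g i) - h (g i)‖ < ε` for all `i`. -/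
theorem stmt_1 {V : Type*} [NormedAddCommGroup V] [NormedSpace ℝ V]
    (D : AddSubgroup V) (hD : Dense (D : Set V))
    {H : Type*} [AddCommGroup H] [AddGroup.FG H]
    (ψ : H →+ V) (n : ℕ) (g : Fin n → H) (ε : ℝ) (hε : 0 < ε) :
    ∃ h : H →+ V, (∀ x : H, h x ∈ D) ∧ ∀ i : Fin n, ‖ψ (g i) - h (g i)‖ < ε := by
  have : Module.Finite ℤ H := Module.Finite.iff_addGroup_fg.mpr ‹_›
  set T := Submodule.torsion ℤ H with hT
  have hfree : Module.Free ℤ (H ⧸ T) := Module.free_of_finite_type_torsion_free'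
  set ι := Module.Free.ChooseBasisIndex ℤ (H ⧸ T) with hι
  set b : Module.Basis ι ℤ (H ⧸ T) := Module.Free.chooseBasis ℤ (H ⧸ T) with hb
  -- ψ kills torsion
  have hker : T ≤ LinearMap.ker ψ.toIntLinearMap := by
    rintro x ⟨⟨m, hm⟩, hx⟩
    simp only [LinearMap.mem_ker, AddMonoidHom.coe_toIntLinearMap]
    have : (m : ℤ) • ψ x = 0 := by
      rw [← map_zsmul]
      simpa using congrArg ψ hx
    have hm0 : ((m : ℤ) : ℝ) ≠ 0 := by
      exact_mod_cast mem_nonZeroDivisors_iff_ne_zero.mp hm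
    have : ((m : ℤ) : ℝ) • ψ x = 0 := by rwa [Int.cast_smul_eq_zsmul]
    exact (smul_eq_zero.mp this).resolve_left hm0
  set ψ' : (H ⧸ T) →ₗ[ℤ] V := T.liftQ ψ.toIntLinearMap hker with hψ'
  -- coefficients
  set q : Fin n → H ⧸ T := fun i => T.mkQ (g i) with hq
  set c : Fin n → ι → ℤ := fun i j => b.repr (q i) j with hc
  set C : ℝ := 1 + ∑ i, ∑ j, |((c i j : ℤ) : ℝ)| with hC
  have hC1 : (1:ℝ) ≤ C := by
    have : (0:ℝ) ≤ ∑ i, ∑ j, |((c i j : ℤ) : ℝ)| :=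
      Finset.sum_nonneg fun i _ => Finset.sum_nonneg fun j _ => abs_nonneg _
    linarith
  have hCpos : (0:ℝ) < C := lt_of_lt_of_le one_pos hC1
  have hεC : 0 < ε / C := div_pos hε hCpos
  -- choose d j ∈ D close to ψ'(b j)
  have hchoice : ∀ j : ι, ∃ d : V, d ∈ D ∧ ‖ψ' (b j) - d‖ < ε / C := by
    intro j
    obtain ⟨d, hd1, hd2⟩ := Metric.dense_iff.mp hD (ψ' (b j)) (ε / C) hεC
    exact ⟨d, hd2, by rwa [← dist_eq_norm, dist_comm, ← Metric.mem_ball]⟩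
  choose d hdD hdε using hchoice
  set h' : (H ⧸ T) →ₗ[ℤ] V := b.constr ℕ d with hh'
  refine ⟨(h'.comp (T.mkQ)).toAddMonoidHom, ?_, ?_⟩
  · intro x
    simp only [LinearMap.toAddMonoidHom_coe, LinearMap.comp_apply, hh',
      Module.Basis.constr_apply_fintype]
    exact AddSubgroup.sum_mem D fun j _ => AddSubgroup.zsmul_mem D (hdD j) _
  · intro i
    have hpsig : ψ (g i) = ψ' (q i) := by
      simp [hψ', hq, Submodule.liftQ_apply]
    have hsum : q i = ∑ j, c i j • b j := (b.sum_repr (q i)).symm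
    have e1 : ψ' (q i) = ∑ j, c i j • ψ' (b j) := by
      rw [hsum, map_sum]; simp
    have e2 : h' (q i) = ∑ j, c i j • d j := by
      rw [hh', hsum, map_sum]; simp
    have key : ψ (g i) - h' (q i) = ∑ j, c i j • (ψ' (b j) - d j) := by
      rw [hpsig, e1, e2, ← Finset.sum_sub_distrib]
      congr 1; ext j; rw [smul_sub]
    have hle : ‖ψ (g i) - h' (q i)‖ ≤ ∑ j, |((c i j : ℤ) : ℝ)| * ‖ψ' (b j) - d j‖ := by
      rw [key]
      refine le_trans (norm_sum_le _ _) (Finset.sum_le_sum fun j _ => ?_)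
      rw [← Int.cast_smul_eq_zsmul ℝ, norm_smul, Real.norm_eq_abs]
    have hbound : ∑ j, |((c i j : ℤ) : ℝ)| * ‖ψ' (b j) - d j‖ < ε := by
      calc ∑ j, |((c i j : ℤ) : ℝ)| * ‖ψ' (b j) - d j‖
          ≤ ∑ j, |((c i j : ℤ) : ℝ)| * (ε / C) := by
            refine Finset.sum_le_sum fun j _ => ?_
            exact mul_le_mul_of_nonneg_left (le_of_lt (hdε j)) (abs_nonneg _)
        _ = (∑ j, |((c i j : ℤ) : ℝ)|) * (ε / C) := by rw [Finset.sum_mul]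
        _ ≤ (C - 1) * (ε / C) := by
            refine mul_le_mul_of_nonneg_right ?_ (le_of_lt hεC)
            have : ∑ j, |((c i j : ℤ) : ℝ)| ≤ ∑ i', ∑ j, |((c i' j : ℤ) : ℝ)| :=
              Finset.single_le_sum (f := fun i' => ∑ j, |((c i' j : ℤ) : ℝ)|)
                (fun i' _ => Finset.sum_nonneg fun j _ => abs_nonneg _) (Finset.mem_univ i)
            simp only [hC]; linarith
        _ < C * (ε / C) := by
            refine mul_lt_mul_of_pos_right ?_ hεC; linarith
        _ = ε := by field_simp
    have : h' (q i) = (h'.comp (T.mkQ)).toAddMonoidHom (g i) := rfl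
    rw [← this]
    exact lt_of_le_of_lt hle hbound
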